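/- The Artin–Hasse exponential AH(t) = exp(t + t^p/p + t^{p²}/p² + ...) has coefficients in ℤ_p, i.e., AH(t) ∈ ℤ_p⟦t⟧. -/

import Mathlib

open PowerSeries Finset

section AuxLemmas

variable {R : Type*} [CommRing R]

lemma aux_coeff_mul_zero (u v : PowerSeries R) {a b j : ℕ}
    (hu : ∀ m < a, PowerSeries.coeff m u = 0)
    (hv : ∀ m < b, PowerSeries.coeff m v = 0) (hj : j < a + b) :
    PowerSeries.coeff j (u * v) = 0 := by
  rw [PowerSeries.coeff_mul]
  apply Finset.sum_eq_zero
  rintro ⟨x, y⟩ hxy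
  rw [Finset.HasAntidiagonal.mem_antidiagonal] at hxy
  rcases lt_or_ge x a with h | h
  · rw [hu x h, zero_mul]
  · rw [hv y (by omega), mul_zero]

lemma aux_ofDigits_zero {p : ℕ} (L : List ℕ) (h : ∀ x ∈ L, x = 0) :
    Nat.ofDigits p L = 0 := by
  induction L with
  | nil => simp
  | cons d L ih =>
      rw [Nat.ofDigits_cons, h d (by simp), ih fun x hx => h x (by simp [hx])]
      simp

lemma aux_padicValNat_factorial_le {p r : ℕ} [hp : Fact p.Prime] (hr : 1 ≤ r) :
    padicValNat p r.factorial ≤ r - 1 := by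
  have h := sub_one_mul_padicValNat_factorial (p := p) r
  have hs : 1 ≤ (p.digits r).sum := by
    by_contra hcon
    push_neg at hcon
    have hsum0 : (p.digits r).sum = 0 := by omega
    have hall : ∀ x ∈ p.digits r, x = 0 := by
      intro x hx
      have := List.single_le_sum (fun (y : ℕ) (_ : y ∈ p.digits r) => Nat.zero_le y) x hx
      omega
    have h0 := aux_ofDigits_zero (p := p) _ hall
    rw [Nat.ofDigits_digits] at h0
    omega
  have hp2 : 2 ≤ p := hp.out.two_le
  have hle : padicValNat p r.factorial ≤ (p - 1) * padicValNat p r.factorial :=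
    Nat.le_mul_of_pos_left _ (by omega)
  omega

lemma aux_norm_pow_factorial {p : ℕ} [hp : Fact p.Prime] {r : ℕ} (hr : 1 ≤ r) :
    ‖(p : ℚ_[p]) ^ (r - 1) * ((r.factorial : ℚ_[p]))⁻¹‖ ≤ 1 := by
  have hv : padicValNat p r.factorial ≤ r - 1 := aux_padicValNat_factorial_le hr
  have hfac : (r.factorial : ℚ_[p]) ≠ 0 := Nat.cast_ne_zero.mpr r.factorial_ne_zero
  have hp1 : (1:ℝ) < p := by exact_mod_cast hp.out.one_lt
  rw [norm_mul, norm_inv, Padic.norm_p_pow, Padic.norm_eq_zpow_neg_valuation hfac,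
    Padic.valuation_natCast]
  rw [← zpow_neg, ← zpow_add₀ (by positivity : (p:ℝ) ≠ 0)]
  apply zpow_le_one_of_nonpos₀ (le_of_lt hp1)
  have : (padicValNat p r.factorial : ℤ) ≤ (r - 1 : ℕ) := by exact_mod_cast hv
  omega

lemma aux_norm_sum_le {p : ℕ} [Fact p.Prime] {ι : Type*} (s : Finset ι) (f : ι → ℚ_[p])
    (h : ∀ k ∈ s, ‖f k‖ ≤ 1) : ‖∑ k ∈ s, f k‖ ≤ 1 := by
  induction s using Finset.cons_induction with
  | empty => simp
  | cons a s ha ih =>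
      rw [Finset.sum_cons]
      refine le_trans (Padic.nonarchimedean _ _) (max_le ?_ ?_)
      · exact h a (Finset.mem_cons_self a s)
      · exact ih fun k hk => h k (Finset.mem_cons_of_mem hk)

end AuxLemmas

open Classical in
/-- The Artin–Hasse exponential
`AH(t) = exp(t + t^p/p + t^{p²}/p² + ⋯)` has coefficients in `ℤ_p`.  Here `AH` is
characterized (equivalently to the exponential formula, in characteristic zero) by
`AH(0) = 1` together with the differential equation
`AH'(t) = AH(t) · (1 + t^{p-1} + t^{p²-1} + ⋯)`, i.e. by the coefficient recurrence
`(n+1)·c_{n+1} = Σ_{j ≤ n, n+1-j a power of p} c_j`. -/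
theorem stmt_7 (p : ℕ) [Fact p.Prime] (F : PowerSeries ℚ_[p])
    (h0 : PowerSeries.coeff 0 F = 1)
    (hAH : ∀ n : ℕ, ((n + 1 : ℕ) : ℚ_[p]) * PowerSeries.coeff (n + 1) F =
        ∑ j ∈ (Finset.range (n + 1)).filter (fun j => ∃ i : ℕ, p ^ i = n + 1 - j),
          PowerSeries.coeff j F) :
    ∀ n : ℕ, ‖PowerSeries.coeff n F‖ ≤ 1 := by
  have hp2 : 2 ≤ p := (Fact.out : p.Prime).two_le
  set c : ℕ → ℚ_[p] := fun n => PowerSeries.coeff n F with hc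
  -- the series S = ∑_{i ≥ 0} t^(p^i - 1)
  set S : PowerSeries ℚ_[p] :=
    PowerSeries.mk (fun k => if ∃ i : ℕ, p ^ i = k + 1 then (1:ℚ_[p]) else 0) with hSdef
  -- the series pS = p·S
  set pS : PowerSeries ℚ_[p] :=
    PowerSeries.mk (fun k => if ∃ i : ℕ, p ^ i = k + 1 then (p:ℚ_[p]) else 0) with hpSdef
  -- the series S₂ = ∑_{i ≥ 1} p·t^(p^i - 1)
  set S₂ : PowerSeries ℚ_[p] :=
    PowerSeries.mk (fun k => if ∃ i : ℕ, p ^ (i+1) = k + 1 then (p:ℚ_[p]) else 0) with hS₂def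
  -- C(t) = F(t^p)
  set Cs : PowerSeries ℚ_[p] :=
    PowerSeries.mk (fun n => if p ∣ n then c (n / p) else 0) with hCsdef
  -- E(t) = exp(pt)
  set E : PowerSeries ℚ_[p] :=
    PowerSeries.mk (fun n => (p:ℚ_[p])^n * ((n.factorial : ℚ_[p]))⁻¹) with hEdef
  -- the differential equation for F
  have hFS : d⁄dX ℚ_[p] F = F * S := by
    ext n
    rw [PowerSeries.coeff_derivative, PowerSeries.coeff_mul,
      Finset.Nat.sum_antidiagonal_eq_sum_range_succ_mk, mul_comm]
    rw [show ((n:ℚ_[p]) + 1) = ((n+1 : ℕ) : ℚ_[p]) by push_cast; ring, hAH n, Finset.sum_filter]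
    apply Finset.sum_congr rfl
    intro k hk
    have hk' : k ≤ n := Nat.lt_succ_iff.mp (Finset.mem_range.mp hk)
    rw [hSdef, PowerSeries.coeff_mk]
    have h2 : n - k + 1 = n + 1 - k := by omega
    rw [h2]
    split_ifs <;> simp
  -- pS = p • S
  have hpSS : pS = (p:ℕ) • S := by
    ext k
    rw [hpSdef, hSdef, map_nsmul, PowerSeries.coeff_mk, PowerSeries.coeff_mk, nsmul_eq_mul]
    split_ifs <;> simp
  -- the differential equation for F^p
  have hA : d⁄dX ℚ_[p] (F ^ p) = (F ^ p) * pS := by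
    rw [Derivation.leibniz_pow, hFS, smul_eq_mul, hpSS]
    rw [show F ^ (p-1) * (F * S) = (F^(p-1) * F) * S by ring, ← pow_succ,
      Nat.sub_add_cancel (by omega), mul_smul_comm]
  -- the differential equation for Cs
  have hCs : d⁄dX ℚ_[p] Cs = Cs * S₂ := by
    ext n
    rw [hCsdef, hS₂def, PowerSeries.coeff_derivative, PowerSeries.coeff_mul,
      Finset.Nat.sum_antidiagonal_eq_sum_range_succ_mk]
    simp only [PowerSeries.coeff_mk]
    by_cases hdvd : p ∣ (n+1)
    · obtain ⟨m, hm⟩ := hdvd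
      have hm1 : 1 ≤ m := by
        rcases Nat.eq_zero_or_pos m with rfl | h
        · omega
        · exact h
      have himg : ((Finset.range m).image (fun j => p * j)) ⊆ Finset.range (n+1) := by
        intro x hx
        simp only [Finset.mem_image, Finset.mem_range] at hx ⊢
        obtain ⟨j, hj, rfl⟩ := hx
        have h1 : p * (j+1) ≤ p * m := Nat.mul_le_mul_left p hj
        rw [Nat.mul_succ] at h1
        omega
      rw [← Finset.sum_subset himg ?_]
      · rw [Finset.sum_image (fun a _ b _ hab => Nat.eq_of_mul_eq_mul_left (by omega) hab)]
        have hterm : ∀ j ∈ Finset.range m,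
            (if p ∣ p * j then c (p * j / p) else 0) *
              (if ∃ i : ℕ, p ^ (i+1) = n - p * j + 1 then (p:ℚ_[p]) else 0)
            = (if ∃ i : ℕ, p ^ i = m - j then c j else 0) * (p:ℚ_[p]) := by
          intro j hj
          rw [Finset.mem_range] at hj
          have hdv : p ∣ p * j := Dvd.intro j rfl
          have hdiv : p * j / p = j := Nat.mul_div_cancel_left j (by omega)
          have hle : p * (j+1) ≤ p * m := Nat.mul_le_mul_left p hj
          rw [Nat.mul_succ] at hle
          have hmul : p * (m - j) + p * j = p * m := by
            rw [← Nat.mul_add]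
            congr 1
            omega
          have harith : n - p * j + 1 = p * (m - j) := by omega
          have hiff : (∃ i : ℕ, p ^ (i+1) = n - p * j + 1) ↔ (∃ i : ℕ, p ^ i = m - j) := by
            rw [harith]
            constructor
            · rintro ⟨i, hi⟩
              rw [pow_succ'] at hi
              exact ⟨i, Nat.eq_of_mul_eq_mul_left (by omega) hi⟩
            · rintro ⟨i, hi⟩
              exact ⟨i, by rw [pow_succ', hi]⟩
          rw [if_pos hdv, hdiv]
          simp only [hiff]
          split_ifs <;> ring
        rw [Finset.sum_congr rfl hterm, ← Finset.sum_mul]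
        have hm' : m - 1 + 1 = m := by omega
        have key := hAH (m - 1)
        rw [hm'] at key
        rw [Finset.sum_filter] at key
        rw [← key]
        have hpd : p ∣ n + 1 := ⟨m, hm⟩
        rw [if_pos hpd, show (n+1)/p = m by rw [hm]; exact Nat.mul_div_cancel_left m (by omega)]
        have hcast : ((n:ℚ_[p]) + 1) = (p:ℚ_[p]) * (m:ℚ_[p]) := by exact_mod_cast hm
        linear_combination (PowerSeries.coeff m F) * hcast
      · intro k hk hknot
        rw [Finset.mem_range] at hk
        have hnd : ¬ p ∣ k := by
          rintro ⟨j, hj⟩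
          apply hknot
          simp only [Finset.mem_image, Finset.mem_range]
          refine ⟨j, ?_, hj.symm⟩
          have : p * j < p * m := by omega
          exact Nat.lt_of_mul_lt_mul_left this
        rw [if_neg hnd, zero_mul]
    · rw [if_neg hdvd, zero_mul]
      symm
      apply Finset.sum_eq_zero
      intro k hk
      rw [Finset.mem_range] at hk
      split_ifs with h1 h2
      · exfalso
        obtain ⟨i, hi⟩ := h2
        have hdv2 : p ∣ n - k + 1 := by
          rw [← hi]
          exact dvd_pow_self p (Nat.succ_ne_zero i)
        apply hdvd
        obtain ⟨a, ha⟩ := h1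
        obtain ⟨b, hb⟩ := hdv2
        exact ⟨a + b, by rw [Nat.mul_add]; omega⟩
      · exact mul_zero _
      · exact zero_mul _
      · exact zero_mul _
  -- the differential equation for E
  have hE : d⁄dX ℚ_[p] E = E * PowerSeries.C (R := ℚ_[p]) (p:ℚ_[p]) := by
    ext n
    rw [hEdef, PowerSeries.coeff_derivative, PowerSeries.coeff_mul_C, PowerSeries.coeff_mk,
      PowerSeries.coeff_mk]
    have h1 : ((n+1).factorial : ℚ_[p]) = (n+1 : ℚ_[p]) * (n.factorial : ℚ_[p]) := by
      rw [Nat.factorial_succ]; push_cast; ring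
    have h2 : ((n.factorial : ℚ_[p])) ≠ 0 := Nat.cast_ne_zero.mpr n.factorial_ne_zero
    have h3 : ((n:ℚ_[p]) + 1) ≠ 0 := by
      have : ((n+1 : ℕ) : ℚ_[p]) ≠ 0 := Nat.cast_ne_zero.mpr n.succ_ne_zero
      push_cast at this; exact this
    rw [h1]
    field_simp
    ring
  -- S₂ + C p = pS
  have hsplit : S₂ + PowerSeries.C (R := ℚ_[p]) (p:ℚ_[p]) = pS := by
    ext k
    rw [hS₂def, hpSdef, map_add, PowerSeries.coeff_mk, PowerSeries.coeff_mk,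
      PowerSeries.coeff_C]
    rcases Nat.eq_zero_or_pos k with rfl | hk
    · have h1 : ¬ ∃ i : ℕ, p ^ (i+1) = 0 + 1 := by
        rintro ⟨i, hi⟩
        have : p ≤ p ^ (i+1) := Nat.le_self_pow (by omega) p
        omega
      have h2 : ∃ i : ℕ, p ^ i = 0 + 1 := ⟨0, by simp⟩
      simp [h1, h2]
      intro; omega
    · have hk0 : k ≠ 0 := by omega
      have hiff : (∃ i : ℕ, p ^ (i+1) = k + 1) ↔ (∃ i : ℕ, p ^ i = k + 1) := by
        constructor
        · rintro ⟨i, hi⟩; exact ⟨i+1, hi⟩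
        · rintro ⟨i, hi⟩
          cases i with
          | zero => simp at hi; omega
          | succ j => exact ⟨j, hi⟩
      simp only [hk0, if_false, add_zero]
      split_ifs with h1 h2 h2 <;> tauto
  -- the differential equation for B = Cs * E
  have hB : d⁄dX ℚ_[p] (Cs * E) = (Cs * E) * pS := by
    rw [Derivation.leibniz, smul_eq_mul, smul_eq_mul, hCs, hE, ← hsplit]
    ring
  -- hence F^p = Cs * E
  have hAB : F ^ p = Cs * E := by
    have h0A : PowerSeries.coeff 0 (F ^ p) = PowerSeries.coeff 0 (Cs * E) := by
      have e1 : PowerSeries.coeff 0 (F ^ p) = (PowerSeries.coeff 0 F) ^ p := by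
        rw [PowerSeries.coeff_zero_eq_constantCoeff_apply, map_pow]
        rw [← PowerSeries.coeff_zero_eq_constantCoeff_apply]
      have e2 : PowerSeries.coeff 0 (Cs * E) =
          (PowerSeries.coeff 0 Cs) * (PowerSeries.coeff 0 E) := by
        rw [PowerSeries.coeff_zero_eq_constantCoeff_apply, map_mul,
          ← PowerSeries.coeff_zero_eq_constantCoeff_apply,
          ← PowerSeries.coeff_zero_eq_constantCoeff_apply]
      have e3 : PowerSeries.coeff 0 Cs = 1 := by
        rw [hCsdef, PowerSeries.coeff_mk, if_pos (dvd_zero p), Nat.zero_div]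
        exact h0
      have e4 : PowerSeries.coeff 0 E = 1 := by
        rw [hEdef, PowerSeries.coeff_mk]
        simp [Nat.factorial]
      rw [e1, e2, e3, e4, h0, one_pow, one_mul]
    have key : ∀ n, PowerSeries.coeff n (F ^ p - Cs * E) = 0 := by
      intro n
      induction n using Nat.strong_induction_on with
      | _ n IH =>
        match n with
        | 0 => rw [map_sub, h0A, sub_self]
        | Nat.succ n =>
          have hD : d⁄dX ℚ_[p] (F ^ p - Cs * E) = (F ^ p - Cs * E) * pS := by
            rw [map_sub, hA, hB, sub_mul]
          have h1 : PowerSeries.coeff n ((F ^ p - Cs * E) * pS) = 0 := by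
            rw [PowerSeries.coeff_mul]
            apply Finset.sum_eq_zero
            rintro ⟨x, y⟩ hxy
            rw [Finset.HasAntidiagonal.mem_antidiagonal] at hxy
            rw [IH x (by omega), zero_mul]
          have h2 := PowerSeries.coeff_derivative (F ^ p - Cs * E) n
          rw [hD, h1] at h2
          have h3 : ((n:ℚ_[p]) + 1) ≠ 0 := by
            have : ((n+1 : ℕ) : ℚ_[p]) ≠ 0 := Nat.cast_ne_zero.mpr n.succ_ne_zero
            push_cast at this; exact this
          field_simp at h2
          rcases mul_eq_zero.mp h2.symm with h | h
          · exact h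
          · exact absurd h h3
    ext n
    have := key n
    rwa [map_sub, sub_eq_zero] at this
  -- main strong induction
  intro n
  induction n using Nat.strong_induction_on with
  | _ n IH =>
    rcases Nat.eq_zero_or_pos n with rfl | hn
    · show ‖PowerSeries.coeff 0 F‖ ≤ 1
      rw [h0]
      norm_num
    · -- the truncation of F below degree n, lifted to ℤ_[p]
      set y : ℕ → ℤ_[p] := fun k => if h : ‖c k‖ ≤ 1 then ⟨c k, h⟩ else 0 with hydef
      have hy : ∀ k, k < n → ((y k : ℚ_[p]) = c k) := by
        intro k hk
        rw [hydef]
        exact (congrArg (fun x : ℤ_[p] => (x : ℚ_[p])) (dif_pos (show ‖c k‖ ≤ 1 from IH k hk))).trans rfl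
      set Q : Polynomial ℤ_[p] := ∑ k ∈ Finset.range n, Polynomial.monomial k (y k) with hQdef
      have hQcoeff : ∀ m, Q.coeff m = if m < n then y m else 0 := by
        intro m
        rw [hQdef, Polynomial.finset_sum_coeff]
        simp only [Polynomial.coeff_monomial]
        rw [Finset.sum_ite_eq' (Finset.range n) m y]
        simp [Finset.mem_range]
      set Ps : PowerSeries ℚ_[p] :=
        ((Q.map (PadicInt.Coe.ringHom (p := p)) : Polynomial ℚ_[p]) : PowerSeries ℚ_[p]) with hPsdef
      have hPs : ∀ m, PowerSeries.coeff m Ps = if m < n then c m else 0 := by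
        intro m
        rw [hPsdef, Polynomial.coeff_coe, Polynomial.coeff_map, hQcoeff m]
        split_ifs with h
        · exact hy m h
        · simp
      set Rr : PowerSeries ℚ_[p] := F - Ps with hRdef
      have hRlow : ∀ m < n, PowerSeries.coeff m Rr = 0 := by
        intro m hm
        rw [hRdef, map_sub, hPs m, if_pos hm]
        exact sub_eq_zero_of_eq rfl
      have hRn : PowerSeries.coeff n Rr = c n := by
        rw [hRdef, map_sub, hPs n, if_neg (lt_irrefl n), sub_zero]
      -- key expansion : coeff n (F^p) = coeff n (Ps^p) + c n * p
      have hsplit2 : PowerSeries.coeff n (F ^ p)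
          = PowerSeries.coeff n (Ps ^ p) + c n * (p:ℚ_[p]) := by
        have hF : F = Ps + Rr := by rw [hRdef]; ring
        rw [hF, add_pow, map_sum]
        have hclaim : ∀ k ∈ Finset.range (p+1),
            PowerSeries.coeff n (Ps ^ k * Rr ^ (p - k) * ((p.choose k : ℕ) : PowerSeries ℚ_[p]))
            = if k = p then PowerSeries.coeff n (Ps ^ p)
              else if k = p - 1 then c n * (p:ℚ_[p]) else 0 := by
          intro k hk
          rw [Finset.mem_range] at hk
          by_cases hkp : k = p
          · subst hkp
            rw [if_pos rfl, Nat.sub_self, pow_zero, mul_one, Nat.choose_self, Nat.cast_one,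
              mul_one]
          · rw [if_neg hkp]
            by_cases hkp1 : k = p - 1
            · subst hkp1
              rw [if_pos rfl]
              have hchoose : p.choose (p-1) = p := by
                rw [← Nat.choose_symm (Nat.sub_le p 1), Nat.sub_sub_self (by omega),
                  Nat.choose_one_right]
              have hsub1 : p - (p - 1) = 1 := by omega
              rw [hsub1, pow_one, hchoose, ← map_natCast (PowerSeries.C (R := ℚ_[p])) p,
                PowerSeries.coeff_mul_C]
              congr 1
              rw [PowerSeries.coeff_mul]
              rw [Finset.sum_eq_single ((0:ℕ), n)]
              · have hc0 : PowerSeries.coeff 0 (Ps ^ (p-1))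
                    = (PowerSeries.constantCoeff Ps) ^ (p - 1) := by
                  rw [PowerSeries.coeff_zero_eq_constantCoeff_apply, map_pow]
                have hcc : PowerSeries.constantCoeff Ps = 1 := by
                  rw [← PowerSeries.coeff_zero_eq_constantCoeff_apply, hPs 0, if_pos hn]
                  exact h0
                rw [hc0, hcc, one_pow, one_mul, hRn]
              · rintro ⟨x, yy⟩ hxy hne
                rw [Finset.HasAntidiagonal.mem_antidiagonal] at hxy
                have : yy < n := by
                  rcases Nat.lt_or_ge yy n with h | h
                  · exact h
                  · exfalso; apply hne; simp at hxy ⊢; omega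
                rw [hRlow yy this, mul_zero]
              · intro hnotmem
                exfalso
                apply hnotmem
                rw [Finset.HasAntidiagonal.mem_antidiagonal]
                simp
            · rw [if_neg hkp1]
              have hpow : Rr ^ (p - k) = Rr ^ (p - k - 2) * Rr * Rr := by
                rw [mul_assoc, ← pow_two, ← pow_add]
                congr 1
                omega
              have hre : Ps ^ k * Rr ^ (p - k) * ((p.choose k : ℕ) : PowerSeries ℚ_[p])
                  = Rr * (Rr * (Rr ^ (p - k - 2) * Ps ^ k *
                      ((p.choose k : ℕ) : PowerSeries ℚ_[p]))) := by
                rw [hpow]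
                ring
              rw [hre]
              refine aux_coeff_mul_zero _ _ (a := n) (b := n) hRlow ?_ (by omega)
              intro m hm
              exact aux_coeff_mul_zero _ _ (a := n) (b := 0) hRlow
                (fun m' hm' => absurd hm' (Nat.not_lt_zero m')) (by omega)
        rw [Finset.sum_congr rfl hclaim, Finset.sum_range_succ, if_pos rfl]
        have hstep : ∀ k ∈ Finset.range p,
            (if k = p then PowerSeries.coeff n (Ps ^ p)
              else if k = p - 1 then c n * (p:ℚ_[p]) else 0)
            = if k = p - 1 then c n * (p:ℚ_[p]) else 0 := by
          intro k hk
          rw [Finset.mem_range] at hk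
          rw [if_neg (by omega)]
        rw [Finset.sum_congr rfl hstep,
          Finset.sum_ite_eq' (Finset.range p) (p-1) (fun _ => c n * (p:ℚ_[p])),
          if_pos (Finset.mem_range.mpr (by omega))]
        ring
      -- the B-side : coeff n (Cs * E) = (if p ∣ n then c (n/p) else 0) + p * w
      set w : ℚ_[p] := ∑ k ∈ Finset.range n,
        (if p ∣ k then c (k/p) else 0) *
          ((p:ℚ_[p])^(n-k-1) * (((n-k).factorial : ℚ_[p]))⁻¹) with hwdef
      have hCsE : PowerSeries.coeff n (Cs * E)
          = (if p ∣ n then c (n/p) else 0) + (p:ℚ_[p]) * w := by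
        rw [PowerSeries.coeff_mul, Finset.Nat.sum_antidiagonal_eq_sum_range_succ_mk,
          Finset.sum_range_succ]
        have hlast : PowerSeries.coeff n Cs * PowerSeries.coeff (n - n) E
            = (if p ∣ n then c (n/p) else 0) := by
          rw [Nat.sub_self, hCsdef, hEdef, PowerSeries.coeff_mk, PowerSeries.coeff_mk]
          simp [Nat.factorial]
        have hterm : ∀ k ∈ Finset.range n,
            PowerSeries.coeff k Cs * PowerSeries.coeff (n - k) E
            = (p:ℚ_[p]) * ((if p ∣ k then c (k/p) else 0) *
                ((p:ℚ_[p])^(n-k-1) * (((n-k).factorial : ℚ_[p]))⁻¹)) := by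
          intro k hk
          rw [Finset.mem_range] at hk
          rw [hCsdef, hEdef, PowerSeries.coeff_mk, PowerSeries.coeff_mk]
          rw [show n - k = (n - k - 1) + 1 by omega, pow_succ']
          rw [show (n - k - 1) + 1 = n - k by omega]
          ring
        rw [Finset.sum_congr rfl hterm, ← Finset.mul_sum, hlast, ← hwdef]
        ring
      have hw : ‖w‖ ≤ 1 := by
        rw [hwdef]
        apply aux_norm_sum_le
        intro k hk
        rw [Finset.mem_range] at hk
        rw [norm_mul]
        have hb1 : ‖if p ∣ k then c (k/p) else 0‖ ≤ 1 := by
          split_ifs with h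
          · exact IH (k/p) (lt_of_le_of_lt (Nat.div_le_self k p) hk)
          · simp
        have hb2 : ‖(p:ℚ_[p])^(n-k-1) * (((n-k).factorial : ℚ_[p]))⁻¹‖ ≤ 1 := by
          have := aux_norm_pow_factorial (p := p) (r := n - k) (by omega)
          simpa using this
        calc ‖if p ∣ k then c (k/p) else 0‖ * ‖(p:ℚ_[p])^(n-k-1) * (((n-k).factorial : ℚ_[p]))⁻¹‖
            ≤ 1 * 1 := mul_le_mul hb1 hb2 (norm_nonneg _) zero_le_one
          _ = 1 := one_mul 1
      -- the A-side polynomial part is a p-adic integer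
      have hz : PowerSeries.coeff n (Ps ^ p) = (((Q ^ p).coeff n : ℤ_[p]) : ℚ_[p]) := by
        rw [hPsdef, ← Polynomial.coe_pow, Polynomial.coeff_coe, ← Polynomial.map_pow,
          Polynomial.coeff_map]
        rfl
      -- its reduction mod p
      have htz : PadicInt.toZMod ((Q ^ p).coeff n)
          = if p ∣ n then PadicInt.toZMod (y (n/p)) else 0 := by
        have e1 : PadicInt.toZMod ((Q ^ p).coeff n)
            = ((Q.map (PadicInt.toZMod)) ^ p).coeff n := by
          rw [← Polynomial.map_pow, Polynomial.coeff_map]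
        rw [e1, ← Polynomial.map_frobenius_expand, Polynomial.coeff_map,
          Polynomial.coeff_expand (by omega : 0 < p)]
        split_ifs with h
        · rw [frobenius_def, ZMod.pow_card, Polynomial.coeff_map, hQcoeff,
            if_pos (show n/p < n from Nat.div_lt_self (by omega) (by omega))]
        · rw [map_zero]
      -- assemble
      have hfinal := congrArg (PowerSeries.coeff n) hAB
      rw [hsplit2, hCsE, hz] at hfinal
      set z : ℤ_[p] := (Q ^ p).coeff n with hzdef
      set u : ℤ_[p] := (if p ∣ n then y (n/p) else 0) - z with hudef
      have hucoe : (u : ℚ_[p]) = (if p ∣ n then c (n/p) else 0) - (z:ℚ_[p]) := by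
        rw [hudef, PadicInt.coe_sub]
        congr 1
        rw [apply_ite (fun x : ℤ_[p] => (x : ℚ_[p]))]
        split_ifs with h
        · exact hy _ (Nat.div_lt_self (by omega) (by omega))
        · simp
      have hu0 : PadicInt.toZMod u = 0 := by
        rw [hudef, map_sub, apply_ite PadicInt.toZMod, map_zero, htz]
        split_ifs <;> simp
      have hdvd_u : (p : ℤ_[p]) ∣ u := by
        have hker : u ∈ RingHom.ker (PadicInt.toZMod (p := p)) := hu0
        rwa [PadicInt.ker_toZMod, PadicInt.maximalIdeal_eq_span_p,
          Ideal.mem_span_singleton] at hker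
      obtain ⟨v, hv⟩ := hdvd_u
      have h5 : ((u:ℚ_[p])) = (p:ℚ_[p]) * (v:ℚ_[p]) := by
        rw [hv, PadicInt.coe_mul]
        norm_cast
      have hp0 : (p:ℚ_[p]) ≠ 0 := Nat.cast_ne_zero.mpr (by omega)
      have hkey : (p:ℚ_[p]) * c n = (p:ℚ_[p]) * ((v:ℚ_[p]) + w) := by
        linear_combination hfinal - hucoe + h5
      have hcn : c n = (v:ℚ_[p]) + w := mul_left_cancel₀ hp0 hkey
      show ‖c n‖ ≤ 1
      rw [hcn]
      refine le_trans (Padic.nonarchimedean _ _) (max_le ?_ hw)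
      rw [PadicInt.padic_norm_e_of_padicInt]
      exact PadicInt.norm_le_one v
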